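/- Let a₁, a₂, b : ℝ∖{0} → ℂ satisfy, for all real k ≠ 0: conj(a₁(−k)) = a₁(k), conj(a₂(−k)) = a₂(k), a₁(k)a₂(k) + b(k)·conj(b(−k)) = 1, and a₁(k)a₂(k) ≠ 0; define r₁(k) = b(k)/a₁(k) and r₂(k) = conj(b(−k))/a₂(k). Then for all x, t ∈ ℝ and all real k ≠ 0 the jump matrix J satisfies the symmetry identity Λ · conj(J(−x,t,−k)) · Λ = [[a₂(k), 0],[0, 1/a₂(k)]] · J(x,t,k) · [[a₁(k), 0],[0, 1/a₁(k)]], where conj denotes entrywise complex conjugation. -/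

import Mathlib

open Complex Matrix

/-- The permutation matrix Λ = [[0,1],[1,0]] (note Λ⁻¹ = Λ). -/
noncomputable def Lam : Matrix (Fin 2) (Fin 2) ℂ := !![0, 1; 1, 0]

/-- The jump matrix J(x,t,k) of the Riemann–Hilbert problem for the NNLS equation. -/
noncomputable def Jmat (r₁ r₂ : ℝ → ℂ) (x t k : ℝ) : Matrix (Fin 2) (Fin 2) ℂ :=
  !![1 + r₁ k * r₂ k, r₂ k * Complex.exp (-(2 * I * k * x) - 4 * I * k ^ 2 * t);
     r₁ k * Complex.exp (2 * I * k * x + 4 * I * k ^ 2 * t), 1]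

/-- Symmetry of the jump matrix of the RH problem of the NNLS equation:
Λ·conj(J(−x,t,−k))·Λ = diag(a₂,1/a₂)·J(x,t,k)·diag(a₁,1/a₁). -/
theorem jump_matrix_symmetry (a₁ a₂ b : ℝ → ℂ)
    (hsym₁ : ∀ k : ℝ, k ≠ 0 → (starRingEnd ℂ) (a₁ (-k)) = a₁ k)
    (hsym₂ : ∀ k : ℝ, k ≠ 0 → (starRingEnd ℂ) (a₂ (-k)) = a₂ k)
    (hdet : ∀ k : ℝ, k ≠ 0 → a₁ k * a₂ k + b k * (starRingEnd ℂ) (b (-k)) = 1)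
    (hne : ∀ k : ℝ, k ≠ 0 → a₁ k * a₂ k ≠ 0)
    (r₁ r₂ : ℝ → ℂ)
    (hr₁ : ∀ k : ℝ, k ≠ 0 → r₁ k = b k / a₁ k)
    (hr₂ : ∀ k : ℝ, k ≠ 0 → r₂ k = (starRingEnd ℂ) (b (-k)) / a₂ k) :
    ∀ (x t : ℝ) (k : ℝ), k ≠ 0 →
      Lam * (Jmat r₁ r₂ (-x) t (-k)).map (starRingEnd ℂ) * Lam
        = !![a₂ k, 0; 0, 1 / a₂ k] * Jmat r₁ r₂ x t k * !![a₁ k, 0; 0, 1 / a₁ k] := by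
  intro x t k hk
  have hk' : (-k : ℝ) ≠ 0 := neg_ne_zero.mpr hk
  have ha₁ : a₁ k ≠ 0 := fun h => hne k hk (by rw [h, zero_mul])
  have ha₂ : a₂ k ≠ 0 := fun h => hne k hk (by rw [h, mul_zero])
  have e1 : (starRingEnd ℂ) (r₁ (-k)) = (starRingEnd ℂ) (b (-k)) / a₁ k := by
    rw [hr₁ (-k) hk', map_div₀, hsym₁ k hk]
  have e2 : (starRingEnd ℂ) (r₂ (-k)) = b k / a₂ k := by
    rw [hr₂ (-k) hk', map_div₀, neg_neg, Complex.conj_conj]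
    rw [hsym₂ k hk]
  have hexp : ∀ z : ℂ, (starRingEnd ℂ) (Complex.exp z) = Complex.exp ((starRingEnd ℂ) z) :=
    fun z => (Complex.exp_conj z).symm
  have hd := hdet k hk
  ext i j
  fin_cases i <;> fin_cases j <;>
    simp [Lam, Jmat, Matrix.mul_apply, Fin.sum_univ_two, Matrix.map_apply,
      Matrix.vecMul, dotProduct, Matrix.vecHead, Matrix.vecTail,
      hexp, map_add, map_sub, _root_.map_mul, map_neg, map_pow, map_ofNat, Complex.conj_I,
      Complex.conj_ofReal, e1, e2, hr₁ k hk, hr₂ k hk] <;>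
    field_simp
  · linear_combination (-1 : ℂ) * hd
  · ring_nf
  · linear_combination hd
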